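/- Let G be an n-vertex graph with a t-layering V1 ⊔ … ⊔ Vt of degree k−1. Let α be a k-coloring of G, let 1 ≤ i ≤ t, let K be a Kempe chain of the restriction of α to G_i, and let γ be the coloring of G_i obtained from α restricted to G_i by performing the Kempe change on K in G_i. Then there exists a k-coloring β of G that is Kempe equivalent to α up to n²·(2k)^t Kempe changes and whose restriction to G_i equals γ. -/

import Mathlib

open SimpleGraph

/-- A proper coloring of `G` with colors in `C`. -/
def IsProperColoring {V C : Type*} (G : SimpleGraph V) (α : V → C) : Prop :=
  ∀ ⦃u v : V⦄, G.Adj u v → α u ≠ α v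

/-- `u` lies in the Kempe chain of `v` for the colors `a`, `b`, computed in the
subgraph of `G` induced by the vertex set `S`. -/
def InKempeChainOn {V C : Type*} (G : SimpleGraph V) (S : Set V) (α : V → C)
    (a b : C) (v u : V) : Prop :=
  Relation.ReflTransGen
    (fun x y => G.Adj x y ∧ x ∈ S ∧ y ∈ S ∧ (α x = a ∨ α x = b) ∧ (α y = a ∨ α y = b)) v u

/-- `u` lies in the Kempe chain of `v` for the colors `a`, `b` in `G`. -/
def InKempeChain {V C : Type*} (G : SimpleGraph V) (α : V → C) (a b : C) (v u : V) : Prop :=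
  InKempeChainOn G Set.univ α a b v u

/-- `β` is obtained from `α` by performing a single Kempe change: the colors `a` and `b`
are swapped on the Kempe chain containing `v`. -/
def KempeStep {V C : Type*} [DecidableEq C] (G : SimpleGraph V) (α β : V → C) : Prop :=
  ∃ (a b : C) (v : V), (α v = a ∨ α v = b) ∧
    (∀ u, InKempeChain G α a b v u → β u = Equiv.swap a b (α u)) ∧
    (∀ u, ¬InKempeChain G α a b v u → β u = α u)

/-- `α` and `β` are Kempe equivalent up to `N` Kempe changes, all intermediate
colorings satisfying the predicate `P`. -/
def KempeEquivIn {V C : Type*} [DecidableEq C] (G : SimpleGraph V) (P : (V → C) → Prop)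
    (N : ℕ) (α β : V → C) : Prop :=
  ∃ (m : ℕ) (f : ℕ → V → C), m ≤ N ∧ f 0 = α ∧ f m = β ∧
    (∀ i ≤ m, P (f i)) ∧ ∀ i < m, KempeStep G (f i) (f (i + 1))

namespace KempeAux

open Relation

variable {V C : Type*}

def ProperOn (G : SimpleGraph V) (A : Set V) (g : V → C) : Prop :=
  ∀ ⦃u⦄, u ∈ A → ∀ ⦃v⦄, v ∈ A → G.Adj u v → g u ≠ g v

def KempeStepOn [DecidableEq C] (G : SimpleGraph V) (A : Set V) (g h : V → C) : Prop :=
  ∃ a b v, v ∈ A ∧ (g v = a ∨ g v = b) ∧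
    (∀ u, InKempeChainOn G A g a b v u → h u = Equiv.swap a b (g u)) ∧
    (∀ u, ¬InKempeChainOn G A g a b v u → h u = g u)

def chg [DecidableEq C] (f : ℕ → V → C) (m : ℕ) (v : V) : ℕ :=
  ∑ s ∈ Finset.range m, if f (s+1) v = f s v then 0 else 1

section chain

variable {G : SimpleGraph V} {S S' : Set V} {g g' : V → C} {a b : C} {v u : V}

lemma mem_of_chain (hv : v ∈ S) (h : InKempeChainOn G S g a b v u) : u ∈ S := by
  induction h with
  | refl => exact hv
  | tail _ h ih => exact h.2.2.1

lemma color_of_chain (hv : g v = a ∨ g v = b) (h : InKempeChainOn G S g a b v u) :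
    g u = a ∨ g u = b := by
  induction h with
  | refl => exact hv
  | tail _ h ih => exact h.2.2.2.2

lemma chain_mono (hS : S ⊆ S') (hg : ∀ x ∈ S, g x = g' x)
    (h : InKempeChainOn G S g a b v u) : InKempeChainOn G S' g' a b v u := by
  induction h with
  | refl => exact ReflTransGen.refl
  | tail _ h ih =>
      exact ih.tail ⟨h.1, hS h.2.1, hS h.2.2.1, (hg _ h.2.1) ▸ h.2.2.2.1,
        (hg _ h.2.2.1) ▸ h.2.2.2.2⟩

lemma chain_singleton
    (hnot : ∀ y, ¬ (G.Adj v y ∧ v ∈ S ∧ y ∈ S ∧ (g v = a ∨ g v = b) ∧ (g y = a ∨ g y = b)))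
    (h : InKempeChainOn G S g a b v u) : u = v := by
  induction h with
  | refl => rfl
  | tail _ h ih => rw [ih] at h; exact absurd h (hnot _)

end chain

section step

variable [DecidableEq C] {G : SimpleGraph V} {A B : Set V} {g h g₂ : V → C}

lemma swap_pair {a b x : C} (hx : x = a ∨ x = b) :
    Equiv.swap a b x = a ∨ Equiv.swap a b x = b := by
  rcases hx with rfl | rfl
  · right; exact Equiv.swap_apply_left _ _
  · left; exact Equiv.swap_apply_right _ _

lemma swap_ne {a b x : C} (hab : a ≠ b) (hx : x = a ∨ x = b) :
    Equiv.swap a b x ≠ x := by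
  rcases hx with rfl | rfl
  · rw [Equiv.swap_apply_left]; exact hab.symm
  · rw [Equiv.swap_apply_right]; exact hab

lemma stepOn_proper (hg : ProperOn G A g) (hs : KempeStepOn G A g h) : ProperOn G A h := by
  obtain ⟨a, b, v, hvA, hv, hon, hoff⟩ := hs
  intro x hx y hy hadj
  by_cases hcx : InKempeChainOn G A g a b v x <;> by_cases hcy : InKempeChainOn G A g a b v y
  · rw [hon x hcx, hon y hcy]
    exact fun e => hg hx hy hadj ((Equiv.swap a b).injective e)
  · rw [hon x hcx, hoff y hcy]
    intro e
    have hcolx := color_of_chain hv hcx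
    have : g y = a ∨ g y = b := e ▸ swap_pair hcolx
    exact hcy (hcx.tail ⟨hadj, hx, hy, hcolx, this⟩)
  · rw [hoff x hcx, hon y hcy]
    intro e
    have hcoly := color_of_chain hv hcy
    have : g x = a ∨ g x = b := e.symm ▸ swap_pair hcoly
    exact hcx (hcy.tail ⟨hadj.symm, hy, hx, hcoly, this⟩)
  · rw [hoff x hcx, hoff y hcy]; exact hg hx hy hadj

lemma stepOn_outside (hs : KempeStepOn G A g h) {v : V} (hv : v ∉ A) : h v = g v := by
  obtain ⟨a, b, w, hwA, _, _, hoff⟩ := hs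
  exact hoff v fun hc => hv (mem_of_chain hwA hc)

open scoped Classical in
lemma stepOn_agree (hgg : ∀ x ∈ B, g x = g₂ x) (hs : KempeStepOn G B g₂ h) :
    KempeStepOn G B g (fun u => if u ∈ B then h u else g u) := by
  obtain ⟨a, b, v, hvB, hv, hon, hoff⟩ := hs
  have hiff : ∀ u, InKempeChainOn G B g a b v u ↔ InKempeChainOn G B g₂ a b v u := by
    intro u
    constructor
    · exact chain_mono (le_refl _) hgg
    · exact chain_mono (le_refl _) (fun x hx => (hgg x hx).symm)
  refine ⟨a, b, v, hvB, (hgg v hvB) ▸ hv, ?_, ?_⟩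
  · intro u hu
    have huB : u ∈ B := mem_of_chain hvB hu
    simp only [if_pos huB, hon u ((hiff u).1 hu), hgg u huB]
  · intro u hu
    by_cases huB : u ∈ B
    · simp only [if_pos huB, hoff u (fun hc => hu ((hiff u).2 hc)), hgg u huB]
    · simp only [if_neg huB]

end step

end KempeAux

namespace KempeAux

open Relation

variable {V C : Type*}

section chglemmas

variable [DecidableEq C] {G : SimpleGraph V} {A : Set V}

lemma chg_zero {f : ℕ → V → C} {m : ℕ} {v : V} (h : ∀ s < m, f (s+1) v = f s v) :
    chg f m v = 0 :=
  Finset.sum_eq_zero fun s hs => if_pos (h s (Finset.mem_range.1 hs))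

lemma chg_succ (f : ℕ → V → C) (m : ℕ) (v : V) :
    chg f (m+1) v = chg f m v + if f (m+1) v = f m v then 0 else 1 :=
  Finset.sum_range_succ _ _

lemma chg_le_one (f : ℕ → V → C) (v : V) : chg f 1 v ≤ 1 := by
  rw [chg, Finset.sum_range_one]
  split <;> omega

lemma chg_off {f : ℕ → V → C} {m : ℕ} (hsteps : ∀ s < m, KempeStepOn G A (f s) (f (s+1))) {v : V} (hv : v ∉ A) :
    chg f m v = 0 :=
  chg_zero fun s hs => stepOn_outside (hsteps s hs) hv

lemma sim_proper {f : ℕ → V → C} {m : ℕ} (h0 : ProperOn G A (f 0))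
    (hsteps : ∀ s < m, KempeStepOn G A (f s) (f (s+1))) :
    ∀ s ≤ m, ProperOn G A (f s) := by
  intro s
  induction s with
  | zero => exact fun _ => h0
  | succ s ih =>
      intro hs
      exact stepOn_proper (ih (by omega)) (hsteps s (by omega))

lemma concat {m₁ m₂ : ℕ} {f₁ f₂ : ℕ → V → C}
    (hend : f₁ m₁ = f₂ 0)
    (hs₁ : ∀ s < m₁, KempeStepOn G A (f₁ s) (f₁ (s+1)))
    (hs₂ : ∀ s < m₂, KempeStepOn G A (f₂ s) (f₂ (s+1)))
    (hne₁ : ∀ s < m₁, f₁ (s+1) ≠ f₁ s)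
    (hne₂ : ∀ s < m₂, f₂ (s+1) ≠ f₂ s) :
    ∃ f : ℕ → V → C, f 0 = f₁ 0 ∧ f (m₁ + m₂) = f₂ m₂ ∧
      (∀ s < m₁ + m₂, KempeStepOn G A (f s) (f (s+1))) ∧
      (∀ s < m₁ + m₂, f (s+1) ≠ f s) ∧
      (∀ v, chg f (m₁ + m₂) v = chg f₁ m₁ v + chg f₂ m₂ v) ∧
      (∀ v, (∀ s ≤ m₁, f₁ s v = f₁ 0 v) → (∀ s ≤ m₂, f₂ s v = f₂ 0 v) →
        ∀ s ≤ m₁ + m₂, f s v = f₁ 0 v) := by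
  have hlow : ∀ s ≤ m₁, (if s < m₁ then f₁ s else f₂ (s - m₁)) = f₁ s := by
    intro s hs
    by_cases h : s < m₁
    · rw [if_pos h]
    · have : s = m₁ := by omega
      subst this
      rw [if_neg h, Nat.sub_self, ← hend]
  have hhigh : ∀ j, (if m₁ + j < m₁ then f₁ (m₁ + j) else f₂ (m₁ + j - m₁)) = f₂ j := by
    intro j
    rw [if_neg (by omega), Nat.add_sub_cancel_left]
  refine ⟨fun s => if s < m₁ then f₁ s else f₂ (s - m₁), ?_, ?_, ?_, ?_, ?_, ?_⟩
  · exact hlow 0 (by omega)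
  · have := hhigh m₂
    simpa using this
  · -- steps
    intro s hs
    simp only []
    by_cases h : s < m₁
    · rw [hlow s (by omega), hlow (s+1) (by omega)]
      exact hs₁ s h
    · obtain ⟨j, rfl⟩ : ∃ j, s = m₁ + j := ⟨s - m₁, by omega⟩
      rw [show m₁ + j + 1 = m₁ + (j+1) by omega, hhigh j, hhigh (j+1)]
      exact hs₂ j (by omega)
  · -- ne
    intro s hs
    simp only []
    by_cases h : s < m₁
    · rw [hlow s (by omega), hlow (s+1) (by omega)]
      exact hne₁ s h
    · obtain ⟨j, rfl⟩ : ∃ j, s = m₁ + j := ⟨s - m₁, by omega⟩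
      rw [show m₁ + j + 1 = m₁ + (j+1) by omega, hhigh j, hhigh (j+1)]
      exact hne₂ j (by omega)
  · -- chg
    intro v
    induction m₂ with
    | zero =>
        have hz : chg f₂ 0 v = 0 := rfl
        rw [Nat.add_zero, hz, Nat.add_zero]
        apply Finset.sum_congr rfl
        intro s hs
        have hs' := Finset.mem_range.1 hs
        simp only [hlow s (by omega), hlow (s+1) (by omega)]
    | succ j ihj =>
        rw [show m₁ + (j+1) = (m₁ + j) + 1 by omega, chg_succ,
          ihj (fun s hs => hs₂ s (by omega)) (fun s hs => hne₂ s (by omega)), chg_succ]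
        simp only [show m₁ + j + 1 = m₁ + (j+1) by omega, hhigh j, hhigh (j+1)]
        omega
  · -- untouched
    intro v h1 h2 s hs
    simp only []
    by_cases h : s ≤ m₁
    · rw [hlow s h]; exact h1 s h
    · obtain ⟨j, rfl⟩ : ∃ j, s = m₁ + j := ⟨s - m₁, by omega⟩
      rw [hhigh j, h2 j (by omega), ← hend]
      exact h1 m₁ (le_refl _)

end chglemmas

end KempeAux

namespace KempeAux

open Relation

variable {V : Type*}

lemma exists_free [Fintype V] {k : ℕ} {G : SimpleGraph V} {A : Set V}
    {g : V → Fin k} (hprop : ProperOn G A g) {w : V} (hw : w ∈ A)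
    (hN : {u | u ∈ A ∧ G.Adj w u}.ncard ≤ k - 1)
    {y z : V} (hyz : y ≠ z) (hy : y ∈ A ∧ G.Adj w y) (hz : z ∈ A ∧ G.Adj w z)
    (hcol : g y = g z) :
    ∃ c : Fin k, c ≠ g w ∧ ∀ u ∈ A, G.Adj w u → g u ≠ c := by
  classical
  set N : Set V := {u | u ∈ A ∧ G.Adj w u} with hNdef
  have hfin : N.Finite := Set.toFinite _
  set Nfin : Finset V := hfin.toFinset with hNfin
  have hNcard : Nfin.card ≤ k - 1 := by
    rw [← Set.ncard_eq_toFinset_card _ hfin]; exact hN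
  have hyN : y ∈ Nfin := hfin.mem_toFinset.2 hy
  have hzN : z ∈ Nfin := hfin.mem_toFinset.2 hz
  have himg : Nfin.image g = (Nfin.erase y).image g := by
    apply Finset.Subset.antisymm
    · intro d hd
      obtain ⟨u, hu, rfl⟩ := Finset.mem_image.1 hd
      by_cases huy : u = y
      · subst huy
        exact Finset.mem_image.2 ⟨z, Finset.mem_erase.2 ⟨fun e => hyz e.symm, hzN⟩, hcol.symm⟩
      · exact Finset.mem_image.2 ⟨u, Finset.mem_erase.2 ⟨huy, hu⟩, rfl⟩
    · exact Finset.image_subset_image (Finset.erase_subset _ _)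
  have himgcard : (Nfin.image g).card ≤ Nfin.card - 1 := by
    rw [himg, ← Finset.card_erase_of_mem hyN]
    exact Finset.card_image_le
  have hkpos : 0 < k := Fin.pos (g w)
  have hNpos : 0 < Nfin.card := Finset.card_pos.2 ⟨y, hyN⟩
  have hFcard : (insert (g w) (Nfin.image g)).card < k := by
    have h1 : (insert (g w) (Nfin.image g)).card ≤ (Nfin.image g).card + 1 :=
      Finset.card_insert_le _ _
    omega
  have : ∃ c : Fin k, c ∉ insert (g w) (Nfin.image g) := by
    by_contra hcon
    push_neg at hcon
    have : insert (g w) (Nfin.image g) = Finset.univ := Finset.eq_univ_iff_forall.2 hcon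
    rw [this, Finset.card_univ, Fintype.card_fin] at hFcard
    omega
  obtain ⟨c, hc⟩ := this
  refine ⟨c, fun e => hc (e ▸ Finset.mem_insert_self _ _), fun u huA hadj e => ?_⟩
  exact hc (Finset.mem_insert_of_mem (Finset.mem_image.2 ⟨u, hfin.mem_toFinset.2 ⟨huA, hadj⟩, e⟩))

lemma clean_one [DecidableEq V] {C : Type*} [DecidableEq C] {G : SimpleGraph V} {A : Set V}
    {g : V → C} (hprop : ProperOn G A g) {w : V} (hwA : w ∈ A) {c : C} (hc1 : c ≠ g w)
    (hc2 : ∀ u ∈ A, G.Adj w u → g u ≠ c) :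
    KempeStepOn G A g (Function.update g w c) := by
  have hnot : ∀ y, ¬ (G.Adj w y ∧ w ∈ A ∧ y ∈ A ∧ (g w = g w ∨ g w = c) ∧
      (g y = g w ∨ g y = c)) := by
    rintro y ⟨hadj, _, hyA, _, hcol | hcol⟩
    · exact hprop hwA hyA hadj hcol.symm
    · exact hc2 y hyA hadj hcol
  refine ⟨g w, c, w, hwA, Or.inl rfl, ?_, ?_⟩
  · intro u hu
    have := chain_singleton hnot hu
    subst this
    rw [Function.update_self, Equiv.swap_apply_left]
  · intro u hu
    have huw : u ≠ w := by
      rintro rfl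
      exact hu ReflTransGen.refl
    rw [Function.update_of_ne huw]

def Post {C : Type*} (G : SimpleGraph V) (A : Set V) (a b : C) (K : Set V)
    (g : V → C) (w : V) : Prop :=
  (g w = a ∨ g w = b) → (∃ x ∈ K, G.Adj w x) →
    ∀ y z, (y ∈ A ∧ G.Adj w y ∧ (g y = a ∨ g y = b)) →
      (z ∈ A ∧ G.Adj w z ∧ (g z = a ∨ g z = b)) → y = z

lemma cleaning [Fintype V] [DecidableEq V] {k : ℕ} {G : SimpleGraph V} {A B : Set V}
    (hBA : B ⊆ A)
    (hdeg : ∀ w ∈ A, w ∉ B → {u | u ∈ A ∧ G.Adj w u}.ncard ≤ k - 1)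
    (a b : Fin k) (K : Set V) (hKB : K ⊆ B) :
    ∀ (L : List V), L.Nodup → ∀ (g : V → Fin k), ProperOn G A g →
    ∃ m f, f 0 = g ∧
      (∀ s < m, KempeStepOn G A (f s) (f (s+1))) ∧
      (∀ s < m, f (s+1) ≠ f s) ∧
      (∀ u, (u ∈ B ∨ u ∉ A ∨ u ∉ L) → ∀ s ≤ m, f s u = g u) ∧
      (∀ u, (f m u = a ∨ f m u = b) → (g u = a ∨ g u = b)) ∧
      (∀ w, chg f m w ≤ 1) ∧
      (∀ w, chg f m w ≠ 0 → (w ∈ A ∧ w ∉ B ∧ ∃ x ∈ K, G.Adj w x)) ∧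
      (∀ w ∈ L, w ∈ A → w ∉ B → Post G A a b K (f m) w) := by
  intro L
  induction L with
  | nil =>
      intro _ g hg
      refine ⟨0, fun _ => g, rfl, by omega, by omega, ?_, fun u h => h, ?_, ?_, ?_⟩
      · intro u _ s hs
        have : s = 0 := by omega
        subst this; rfl
      · intro w'
        have : chg (fun _ => g) 0 w' = 0 := rfl
        omega
      · intro w' hw'
        exact absurd rfl hw'
      · intro w' hw'
        exact absurd hw' List.not_mem_nil
  | cons w L' ih =>
      intro hnd g hg
      have hwL' : w ∉ L' := (List.nodup_cons.1 hnd).1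
      have hnd' : L'.Nodup := (List.nodup_cons.1 hnd).2
      by_cases hcrit : w ∈ A ∧ w ∉ B ∧ (g w = a ∨ g w = b) ∧ (∃ x ∈ K, G.Adj w x) ∧
        ∃ y z, y ≠ z ∧ (y ∈ A ∧ G.Adj w y ∧ (g y = a ∨ g y = b)) ∧
          (z ∈ A ∧ G.Adj w z ∧ (g z = a ∨ g z = b))
      · obtain ⟨hwA, hwB, hwpair, hKr, y, z, hyz, hy, hz⟩ := hcrit
        have hcyz : g y = g z := by
          rcases hwpair with hw | hw <;> rcases hy.2.2 with h1 | h1 <;>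
            rcases hz.2.2 with h2 | h2 <;>
            first
              | (exact h1.trans h2.symm)
              | (exact absurd (hw.trans h1.symm) (hg hwA hy.1 hy.2.1))
              | (exact absurd (hw.trans h2.symm) (hg hwA hz.1 hz.2.1))
        obtain ⟨c, hc1, hc2⟩ :=
          exists_free hg hwA (hdeg w hwA hwB) hyz ⟨hy.1, hy.2.1⟩ ⟨hz.1, hz.2.1⟩ hcyz
        have hcpair : ¬ (c = a ∨ c = b) := by
          rintro (hca | hcb)
          · rcases hwpair with hw | hw
            · exact hc1 (hca.trans hw.symm)
            · rcases hy.2.2 with h1 | h1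
              · exact hc2 y hy.1 hy.2.1 (h1.trans hca.symm)
              · exact hg hwA hy.1 hy.2.1 (hw.trans h1.symm)
          · rcases hwpair with hw | hw
            · rcases hy.2.2 with h1 | h1
              · exact hg hwA hy.1 hy.2.1 (hw.trans h1.symm)
              · exact hc2 y hy.1 hy.2.1 (h1.trans hcb.symm)
            · exact hc1 (hcb.trans hw.symm)
        set g₁ := Function.update g w c with hg₁def
        have hstep1 : KempeStepOn G A g g₁ := clean_one hg hwA hc1 hc2
        have hg1prop : ProperOn G A g₁ := stepOn_proper hg hstep1
        have hg1w : g₁ w = c := Function.update_self _ _ _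
        have hg1ne : ∀ u, u ≠ w → g₁ u = g u := fun u hu => Function.update_of_ne hu _ _
        obtain ⟨m', f', hf0, hsteps', hne', hunt', hpm', hcle', hcnz', hpost'⟩ :=
          ih hnd' g₁ hg1prop
        have hend : (fun s => if s = 0 then g else g₁) 1 = f' 0 := by
          simp only [if_neg (by omega : (1:ℕ) ≠ 0)]
          exact hf0.symm
        obtain ⟨f, hF0, hFend, hFsteps, hFne, hFchg, hFun⟩ :=
          concat (G := G) (A := A) (m₁ := 1) (m₂ := m')
            (f₁ := fun s => if s = 0 then g else g₁) (f₂ := f') hend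
            (by
              intro s hs
              have : s = 0 := by omega
              subst this
              simpa using hstep1)
            hsteps'
            (by
              intro s hs
              have hs0 : s = 0 := by omega
              subst hs0
              simp only [Nat.zero_add, if_neg (by omega : (1:ℕ) ≠ 0), if_pos rfl]
              intro e
              have := congrFun e w
              rw [hg1w] at this
              exact hc1 this)
            hne'
        have hF0' : f 0 = g := by simpa using hF0
        have hfw_const : ∀ s ≤ m', f' s w = g₁ w := fun s hs =>
          hunt' w (Or.inr (Or.inr hwL')) s hs
        have hfmw : f (1 + m') w = c := by
          rw [hFend]
          rw [hfw_const m' (le_refl _), hg1w]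
        refine ⟨1 + m', f, hF0', hFsteps, hFne, ?_, ?_, ?_, ?_, ?_⟩
        · -- untouched
          intro u hu s hs
          have huw : u ≠ w := by
            rintro rfl
            rcases hu with h | h | h
            · exact hwB h
            · exact h hwA
            · exact h List.mem_cons_self
          have h1 : ∀ s ≤ 1, (fun s => if s = 0 then g else g₁) s u
              = (fun s => if s = 0 then g else g₁) 0 u := by
            intro s hs
            rcases Nat.le_one_iff_eq_zero_or_eq_one.1 hs with rfl | rfl
            · rfl
            · simp [hg1ne u huw]
          have h2 : ∀ s ≤ m', f' s u = f' 0 u := by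
            intro s hs
            have hcond : u ∈ B ∨ u ∉ A ∨ u ∉ L' := by
              rcases hu with h | h | h
              · exact Or.inl h
              · exact Or.inr (Or.inl h)
              · exact Or.inr (Or.inr (fun hm => h (List.mem_cons_of_mem _ hm)))
            rw [hunt' u hcond s hs, hunt' u hcond 0 (by omega)]
          have := hFun u h1 h2 s hs
          simpa using this
        · -- pairmono
          intro u hpair
          rw [hFend] at hpair
          have := hpm' u hpair
          by_cases huw : u = w
          · subst huw
            rw [hg1w] at this
            exact absurd this hcpair
          · rwa [hg1ne u huw] at this
        · -- chg ≤ 1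
          intro w''
          rw [hFchg]
          by_cases hww : w'' = w
          · subst hww
            have : chg f' m' w'' = 0 :=
              chg_zero fun s hs => by
                rw [hfw_const (s+1) (by omega), hfw_const s (by omega)]
            rw [this]
            have := chg_le_one (fun s => if s = 0 then g else g₁) w''
            omega
          · have : chg (fun s => if s = 0 then g else g₁) 1 w'' = 0 :=
              chg_zero fun s hs => by
                have hs0 : s = 0 := by omega
                subst hs0
                simp [hg1ne w'' hww]
            rw [this]
            have := hcle' w''
            omega
        · -- chg ≠ 0 → charge
          intro w'' hnz
          rw [hFchg] at hnz
          by_cases hww : w'' = w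
          · subst hww
            exact ⟨hwA, hwB, hKr⟩
          · have : chg (fun s => if s = 0 then g else g₁) 1 w'' = 0 :=
              chg_zero fun s hs => by
                have hs0 : s = 0 := by omega
                subst hs0
                simp [hg1ne w'' hww]
            rw [this] at hnz
            exact hcnz' w'' (by omega)
        · -- Post
          intro w'' hmem hA' hB'
          rcases List.mem_cons.1 hmem with rfl | hmem'
          · intro hpair
            rw [hFend] at hpair
            rw [hfw_const m' (le_refl _), hg1w] at hpair
            exact absurd hpair hcpair
          · rw [hFend]
            exact hpost' w'' hmem' hA' hB'
      · obtain ⟨m', f', hf0, hsteps', hne', hunt', hpm', hcle', hcnz', hpost'⟩ :=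
          ih hnd' g hg
        refine ⟨m', f', hf0, hsteps', hne', ?_, hpm', hcle', hcnz', ?_⟩
        · intro u hu s hs
          have hcond : u ∈ B ∨ u ∉ A ∨ u ∉ L' := by
            rcases hu with h | h | h
            · exact Or.inl h
            · exact Or.inr (Or.inl h)
            · exact Or.inr (Or.inr (fun hm => h (List.mem_cons_of_mem _ hm)))
          exact hunt' u hcond s hs
        · intro w'' hmem hA' hB'
          rcases List.mem_cons.1 hmem with rfl | hmem'
          · -- Post for w from ¬criterion
            intro hpair hkr y' z' hy' hz'
            have hwconst : f' m' w'' = g w'' :=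
              hunt' w'' (Or.inr (Or.inr hwL')) m' (le_refl _)
            rw [hwconst] at hpair
            by_contra hne
            apply hcrit
            refine ⟨hA', hB', hpair, hkr, y', z', hne, ?_, ?_⟩
            · exact ⟨hy'.1, hy'.2.1, hpm' y' hy'.2.2⟩
            · exact ⟨hz'.1, hz'.2.1, hpm' z' hz'.2.2⟩
          · exact hpost' w'' hmem' hA' hB'

end KempeAux

namespace KempeAux

open Relation

variable {V : Type*}

lemma segment [Fintype V] [DecidableEq V] {k : ℕ} {G : SimpleGraph V} {A B : Set V}
    (hBA : B ⊆ A)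
    (hdeg : ∀ w ∈ A, w ∉ B → {u | u ∈ A ∧ G.Adj w u}.ncard ≤ k - 1)
    {α γ' : V → Fin k} (hα : ProperOn G A α) (hstep : KempeStepOn G B α γ') :
    ∃ m f, f 0 = α ∧
      (∀ s < m, KempeStepOn G A (f s) (f (s+1))) ∧
      (∀ s < m, f (s+1) ≠ f s) ∧
      (∀ u ∈ B, f m u = γ' u) ∧
      (∀ u ∈ B, chg f m u ≤ if γ' u = α u then 0 else 1) ∧
      (∀ w, w ∉ B → chg f m w ≤ 2 ∧
        (chg f m w ≠ 0 → ∃ x, x ∈ B ∧ G.Adj w x ∧ γ' x ≠ α x)) := by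
  classical
  obtain ⟨a, b, v₀, hv₀B, hv₀, hon, hoff⟩ := hstep
  by_cases hab : a = b
  · subst hab
    have hγα : ∀ u, γ' u = α u := by
      intro u
      by_cases hc : InKempeChainOn G B α a a v₀ u
      · rw [hon u hc, Equiv.swap_self]
        rfl
      · exact hoff u hc
    have hchg0 : ∀ w, chg (fun _ : ℕ => α) 0 w = 0 := fun w => rfl
    refine ⟨0, fun _ => α, rfl, by omega, by omega, fun u _ => (hγα u).symm, ?_, ?_⟩
    · intro u _
      rw [hγα u, if_pos rfl, hchg0 u]
    · intro w _
      rw [hchg0 w]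
      exact ⟨by omega, fun h => absurd rfl h⟩
  · set K : Set V := {u | InKempeChainOn G B α a b v₀ u} with hKdef
    have hv₀K : v₀ ∈ K := ReflTransGen.refl
    have hKB : K ⊆ B := fun u hu => mem_of_chain hv₀B hu
    have hKpair : ∀ x ∈ K, α x = a ∨ α x = b := fun x hx => color_of_chain hv₀ hx
    have hKch : ∀ x ∈ K, γ' x ≠ α x := fun x hx => by
      rw [hon x hx]
      exact swap_ne hab (hKpair x hx)
    obtain ⟨mc, fc, hc0, hcsteps, hcne, hcunt, hcpm, hcle, hcnz, hcpost⟩ :=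
      cleaning hBA hdeg a b K hKB Finset.univ.toList Finset.univ.nodup_toList α hα
    set δ := fc mc with hδdef
    have hδB : ∀ u ∈ B, δ u = α u := fun u hu => hcunt u (Or.inl hu) mc (le_refl _)
    have hδprop : ProperOn G A δ := by
      refine sim_proper ?_ hcsteps mc (le_refl _)
      rw [hc0]; exact hα
    set T : Set V := {u | InKempeChainOn G A δ a b v₀ u} with hTdef
    have hδv₀ : δ v₀ = a ∨ δ v₀ = b := by rw [hδB v₀ hv₀B]; exact hv₀
    have hQ : ∀ u, u ∈ T → (u ∈ K ∨ (u ∈ A ∧ u ∉ B ∧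
        ∀ z, z ∈ A → G.Adj u z → (δ z = a ∨ δ z = b) → z ∈ K)) := by
      intro u hu
      simp only [hTdef, Set.mem_setOf_eq] at hu
      induction hu with
      | refl => exact Or.inl hv₀K
      | @tail x y hvx hrel ih =>
          rcases ih with hK | ⟨hxA, hxB, hall⟩
          · by_cases hyB : y ∈ B
            · left
              refine ReflTransGen.tail hK ⟨hrel.1, hKB hK, hyB, hKpair x hK, ?_⟩
              rw [← hδB y hyB]
              exact hrel.2.2.2.2
            · right
              refine ⟨hrel.2.2.1, hyB, ?_⟩
              intro z hzA hadj hzpair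
              have hpost := hcpost y (Finset.mem_toList.2 (Finset.mem_univ y)) hrel.2.2.1 hyB
              have hKr : ∃ x' ∈ K, G.Adj y x' := ⟨x, hK, hrel.1.symm⟩
              have heq := hpost hrel.2.2.2.2 hKr z x ⟨hzA, hadj, hzpair⟩
                ⟨hBA (hKB hK), hrel.1.symm, hrel.2.2.2.1⟩
              rw [heq]
              exact hK
          · exact Or.inl (hall y hrel.2.2.1 hrel.1 hrel.2.2.2.2)
    have hTB : ∀ u ∈ B, (u ∈ T ↔ u ∈ K) := by
      intro u huB
      constructor
      · intro hu
        rcases hQ u hu with h | ⟨_, hnB, _⟩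
        · exact h
        · exact absurd huB hnB
      · intro hu
        exact chain_mono hBA (fun x hx => (hδB x hx).symm) hu
    set g₂ : V → Fin k := fun u => if u ∈ T then Equiv.swap a b (δ u) else δ u with hg₂def
    have hstepT : KempeStepOn G A δ g₂ := by
      refine ⟨a, b, v₀, hBA hv₀B, hδv₀, ?_, ?_⟩
      · intro u hu
        simp only [hg₂def]
        rw [if_pos (show u ∈ T from hu)]
      · intro u hu
        simp only [hg₂def]
        rw [if_neg (show u ∉ T from hu)]
    have hg₂B : ∀ u ∈ B, g₂ u = γ' u := by
      intro u huB
      by_cases hK : u ∈ K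
      · have hT : u ∈ T := (hTB u huB).2 hK
        simp only [hg₂def]
        rw [if_pos hT, hδB u huB]
        exact (hon u hK).symm
      · have hT : u ∉ T := fun h => hK ((hTB u huB).1 h)
        simp only [hg₂def]
        rw [if_neg hT, hδB u huB]
        exact (hoff u hK).symm
    have hg₂ne : ∀ u, u ∉ T → g₂ u = δ u := by
      intro u hu
      simp only [hg₂def]
      rw [if_neg hu]
    have hv₀T : v₀ ∈ T := ReflTransGen.refl
    have hg₂v₀ : g₂ v₀ ≠ δ v₀ := by
      simp only [hg₂def]
      rw [if_pos hv₀T]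
      exact swap_ne hab hδv₀
    have hend : fc mc = (fun s : ℕ => if s = 0 then δ else g₂) 0 := rfl
    obtain ⟨f, hF0, hFend, hFsteps, hFne, hFchg, hFun⟩ :=
      concat (G := G) (A := A) (m₁ := mc) (m₂ := 1)
        (f₁ := fc) (f₂ := fun s => if s = 0 then δ else g₂) hend
        hcsteps
        (by
          intro s hs
          have hs0 : s = 0 := by omega
          subst hs0
          simpa using hstepT)
        hcne
        (by
          intro s hs
          have hs0 : s = 0 := by omega
          subst hs0
          simp only [Nat.zero_add, if_neg (by omega : (1:ℕ) ≠ 0), if_pos rfl]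
          intro e
          exact hg₂v₀ (congrFun e v₀))
    have hFlast : ∀ u, f (mc + 1) u = g₂ u := by
      intro u
      rw [hFend]
      simp
    have hchgflip : ∀ u, chg (fun s : ℕ => if s = 0 then δ else g₂) 1 u
        = if g₂ u = δ u then 0 else 1 := by
      intro u
      rw [chg, Finset.sum_range_one]
      simp
    refine ⟨mc + 1, f, by rw [hF0, hc0], hFsteps, hFne, ?_, ?_, ?_⟩
    · intro u huB
      rw [hFlast u, hg₂B u huB]
    · intro u huB
      have hc_zero : chg fc mc u = 0 :=
        chg_zero fun s hs => by
          rw [hcunt u (Or.inl huB) (s+1) (by omega), hcunt u (Or.inl huB) s (by omega)]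
      rw [hFchg, hc_zero, hchgflip u, Nat.zero_add]
      by_cases hcase : γ' u = α u
      · rw [if_pos hcase, if_pos (by rw [hg₂B u huB, hδB u huB, hcase])]
      · rw [if_neg hcase]
        split <;> omega
    · intro w hwB
      rw [hFchg, hchgflip w]
      constructor
      · have := hcle w
        split <;> omega
      · intro hnz
        by_cases hcz : chg fc mc w = 0
        · rw [hcz] at hnz
          have hg₂w : g₂ w ≠ δ w := by
            intro e
            rw [if_pos e] at hnz
            exact hnz rfl
          have hwT : w ∈ T := by
            by_contra h
            exact hg₂w (hg₂ne w h)
          rcases hQ w hwT with hK | ⟨hwA, _, hall⟩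
          · exact absurd (hKB hK) hwB
          · rcases (Relation.ReflTransGen.cases_tail hwT) with heq | ⟨p, hp, hrel⟩
            · exact absurd (heq ▸ hv₀B) hwB
            · have hpK : p ∈ K := hall p hrel.2.1 hrel.1.symm hrel.2.2.2.1
              exact ⟨p, hKB hpK, hrel.1.symm, hKch p hpK⟩
        · obtain ⟨hwA, hwB', x, hxK, hadj⟩ := hcnz w hcz
          exact ⟨x, hKB hxK, hadj, hKch x hxK⟩

end KempeAux

namespace KempeAux

open Relation

variable {V : Type*}

lemma outer [Fintype V] [DecidableEq V] {k : ℕ} {G : SimpleGraph V} {A B : Set V}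
    (hBA : B ⊆ A)
    (hdeg : ∀ w ∈ A, w ∉ B → {u | u ∈ A ∧ G.Adj w u}.ncard ≤ k - 1) :
    ∀ (m' : ℕ) (f' : ℕ → V → Fin k),
      (∀ s < m', KempeStepOn G B (f' s) (f' (s+1))) →
      ∀ (α : V → Fin k), ProperOn G A α → (∀ u ∈ B, α u = f' 0 u) →
      ∃ m f, f 0 = α ∧
        (∀ s < m, KempeStepOn G A (f s) (f (s+1))) ∧
        (∀ s < m, f (s+1) ≠ f s) ∧
        (∀ u ∈ B, f m u = f' m' u) ∧
        (∀ u ∈ B, chg f m u ≤ chg f' m' u) ∧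
        (∀ w, w ∉ B → chg f m w ≤
          2 * ∑ x ∈ (Set.toFinite {x | x ∈ B ∧ G.Adj w x}).toFinset, chg f' m' x) := by
  classical
  intro m'
  induction m' with
  | zero =>
      intro f' _ α hα hαB
      refine ⟨0, fun _ => α, rfl, by omega, by omega, fun u hu => hαB u hu, ?_, ?_⟩
      · intro u _
        rw [show chg (fun _ => α) 0 u = 0 from rfl]
        omega
      · intro w _
        rw [show chg (fun _ => α) 0 w = 0 from rfl]
        omega
  | succ m' ihm =>
      intro f' hsteps' α hα hαB
      obtain ⟨m₁, f₁, h10, h1steps, h1ne, h1B, h1chgB, h1chgW⟩ :=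
        ihm f' (fun s hs => hsteps' s (by omega)) α hα hαB
      have h1prop : ProperOn G A (f₁ m₁) := by
        refine sim_proper ?_ h1steps m₁ (le_refl _)
        rw [h10]; exact hα
      have hstep : KempeStepOn G B (f' m') (f' (m'+1)) := hsteps' m' (by omega)
      have hagree : ∀ x ∈ B, f₁ m₁ x = f' m' x := h1B
      have hstep2 : KempeStepOn G B (f₁ m₁)
          (fun u => if u ∈ B then f' (m'+1) u else f₁ m₁ u) := stepOn_agree hagree hstep
      obtain ⟨m₂, f₂, h20, h2steps, h2ne, h2B, h2chgB, h2chgW⟩ :=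
        segment hBA hdeg h1prop hstep2
      obtain ⟨f, hF0, hFend, hFsteps, hFne, hFchg, _⟩ :=
        concat (G := G) (A := A) (m₁ := m₁) (m₂ := m₂) (f₁ := f₁) (f₂ := f₂)
          h20.symm h1steps h2steps h1ne h2ne
      refine ⟨m₁ + m₂, f, by rw [hF0, h10], hFsteps, hFne, ?_, ?_, ?_⟩
      · intro u huB
        have := h2B u huB
        rw [hFend, this]
        simp only [if_pos huB]
      · intro u huB
        rw [hFchg, chg_succ]
        have h2 := h2chgB u huB
        by_cases hcase : f' (m'+1) u = f' m' u
        · have hcond : (if u ∈ B then f' (m'+1) u else f₁ m₁ u) = f₁ m₁ u := by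
            rw [if_pos huB, hagree u huB, hcase]
          rw [hcond] at h2
          simp at h2
          have h1c := h1chgB u huB
          rw [if_pos hcase]
          omega
        · have hle1 : ∀ (c : Prop) (inst : Decidable c), (if c then (0:ℕ) else 1) ≤ 1 := by
            intro c inst
            split <;> omega
          have h2' : chg f₂ m₂ u ≤ 1 := le_trans h2 (hle1 _ _)
          have h1c := h1chgB u huB
          rw [if_neg hcase]
          omega
      · intro w hwB
        rw [hFchg]
        have h2 := h2chgW w hwB
        have hsum : ∑ x ∈ (Set.toFinite {x | x ∈ B ∧ G.Adj w x}).toFinset, chg f' (m'+1) x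
            = ∑ x ∈ (Set.toFinite {x | x ∈ B ∧ G.Adj w x}).toFinset, chg f' m' x
              + ∑ x ∈ (Set.toFinite {x | x ∈ B ∧ G.Adj w x}).toFinset,
                  (if f' (m'+1) x = f' m' x then 0 else 1) := by
          rw [← Finset.sum_add_distrib]
          exact Finset.sum_congr rfl fun x _ => chg_succ _ _ _
        by_cases hch : chg f₂ m₂ w = 0
        · have h1w := h1chgW w hwB
          rw [hsum, hch]
          omega
        · obtain ⟨x, hxB, hadj, hxne⟩ := h2.2 hch
          simp only [if_pos hxB, hagree x hxB] at hxne
          have hxmem : x ∈ (Set.toFinite {x | x ∈ B ∧ G.Adj w x}).toFinset :=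
            (Set.toFinite _).mem_toFinset.2 ⟨hxB, hadj⟩
          have hterm : (1:ℕ) ≤ ∑ x ∈ (Set.toFinite {x | x ∈ B ∧ G.Adj w x}).toFinset,
              (if f' (m'+1) x = f' m' x then 0 else 1) := by
            calc (1:ℕ) = (if f' (m'+1) x = f' m' x then 0 else 1) := (if_neg hxne).symm
              _ ≤ _ := Finset.single_le_sum
                  (f := fun y => if f' (m'+1) y = f' m' y then (0:ℕ) else 1)
                  (fun _ _ => Nat.zero_le _) hxmem
          have h1w := h1chgW w hwB
          have h2' : chg f₂ m₂ w ≤ 2 := h2.1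
          rw [hsum]
          omega

end KempeAux

namespace KempeAux

open Relation

variable {V : Type*}

lemma main [Fintype V] [DecidableEq V] {k : ℕ} {G : SimpleGraph V} :
    ∀ (t : ℕ) (A : Set V) (lvl : V → ℕ),
      (∀ v ∈ A, lvl v < t) →
      (∀ v ∈ A, {u | u ∈ A ∧ G.Adj v u ∧ lvl v ≤ lvl u}.ncard ≤ k - 1) →
      ∀ (i : ℕ) (α γ : V → Fin k), ProperOn G A α →
        KempeStepOn G (A ∩ {v | i ≤ lvl v}) α γ →
        ∃ m f, f 0 = α ∧
          (∀ s ≤ m, ProperOn G A (f s)) ∧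
          (∀ s < m, KempeStepOn G A (f s) (f (s+1))) ∧
          (∀ s < m, f (s+1) ≠ f s) ∧
          (∀ v ∈ A, i ≤ lvl v → f m v = γ v) ∧
          (∀ v, chg f m v ≤ (2*k)^t) := by
  classical
  intro t
  induction t with
  | zero =>
      intro A lvl hA hdeg i α γ hα hγ
      refine ⟨0, fun _ => α, rfl, fun s _ => hα, by omega, by omega, ?_, ?_⟩
      · intro v hv _
        exact absurd (hA v hv) (by omega)
      · intro v
        rw [show chg (fun _ => α) 0 v = 0 from rfl]
        omega
  | succ t iht =>
      intro A lvl hA hdeg i α γ hα hγ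
      rcases Nat.eq_zero_or_pos i with rfl | hi
      · have hset : A ∩ {v | 0 ≤ lvl v} = A := by
          ext v
          simp
        rw [hset] at hγ
        by_cases hne : γ = α
        · refine ⟨0, fun _ => α, rfl, fun _ _ => hα, by omega, by omega, ?_, ?_⟩
          · intro v _ _
            rw [hne]
          · intro v
            rw [show chg (fun _ => α) 0 v = 0 from rfl]
            omega
        · refine ⟨1, fun s => if s = 0 then α else γ, rfl, ?_, ?_, ?_, ?_, ?_⟩
          · intro s hs
            rcases Nat.le_one_iff_eq_zero_or_eq_one.1 hs with rfl | rfl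
            · simpa using hα
            · have : ProperOn G A γ := stepOn_proper hα hγ
              simpa using this
          · intro s hs
            have hs0 : s = 0 := by omega
            subst hs0
            simpa using hγ
          · intro s hs
            have hs0 : s = 0 := by omega
            subst hs0
            simpa using hne
          · intro v _ _
            simp
          · intro v
            have h1 : chg (fun s => if s = 0 then α else γ) 1 v ≤ 1 := chg_le_one _ _
            have hk : 0 < k := Fin.pos (α v)
            calc chg (fun s => if s = 0 then α else γ) 1 v ≤ 1 := h1
              _ ≤ (2*k)^(t+1) := Nat.one_le_pow _ _ (by omega)
      · set A' : Set V := A ∩ {v | 1 ≤ lvl v} with hA'def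
        have hA'A : A' ⊆ A := Set.inter_subset_left
        have hseteq : A' ∩ {v | i - 1 ≤ lvl v - 1} = A ∩ {v | i ≤ lvl v} := by
          ext v
          simp only [hA'def, Set.mem_inter_iff, Set.mem_setOf_eq]
          constructor
          · rintro ⟨⟨h1, h2⟩, h3⟩
            exact ⟨h1, by omega⟩
          · rintro ⟨h1, h2⟩
            exact ⟨⟨h1, by omega⟩, by omega⟩
        obtain ⟨m', f', hf0, hprop', hsteps', hne', hfin', hchg'⟩ :=
          iht A' (fun v => lvl v - 1)
            (by
              rintro v ⟨hvA, hv1⟩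
              have h1 := hA v hvA
              simp only [Set.mem_setOf_eq] at hv1
              show lvl v - 1 < t
              omega)
            (by
              rintro v ⟨hvA, hv1⟩
              refine le_trans (Set.ncard_le_ncard ?_ (Set.toFinite _)) (hdeg v hvA)
              rintro u ⟨⟨huA, hu1⟩, hadj, hle⟩
              simp only [Set.mem_setOf_eq] at hu1 hv1 hle ⊢
              exact ⟨huA, hadj, by omega⟩)
            (i - 1) α γ
            (fun u hu v hv hadj => hα (hA'A hu) (hA'A hv) hadj)
            (by rw [hseteq]; exact hγ)
        have hdeglow : ∀ w ∈ A, w ∉ A' → {u | u ∈ A ∧ G.Adj w u}.ncard ≤ k - 1 := by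
          intro w hwA hwA'
          have hlvl0 : lvl w = 0 := by
            by_contra h
            exact hwA' ⟨hwA, by simp only [Set.mem_setOf_eq]; omega⟩
          have hseteq2 : {u | u ∈ A ∧ G.Adj w u} = {u | u ∈ A ∧ G.Adj w u ∧ lvl w ≤ lvl u} := by
            ext u
            simp only [Set.mem_setOf_eq, hlvl0]
            constructor
            · rintro ⟨h1, h2⟩
              exact ⟨h1, h2, by omega⟩
            · rintro ⟨h1, h2, _⟩
              exact ⟨h1, h2⟩
          rw [hseteq2]
          exact hdeg w hwA
        obtain ⟨m, f, hF0, hFsteps, hFne, hFB, hFchgB, hFchgW⟩ :=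
          outer hA'A hdeglow m' f' hsteps' α hα (fun u _ => by rw [hf0])
        refine ⟨m, f, hF0, ?_, hFsteps, hFne, ?_, ?_⟩
        · intro s hs
          refine sim_proper ?_ hFsteps s hs
          rw [hF0]
          exact hα
        · intro v hvA hvi
          have hvA' : v ∈ A' := ⟨hvA, show (1:ℕ) ≤ lvl v by omega⟩
          rw [hFB v hvA']
          exact hfin' v hvA' (show i - 1 ≤ lvl v - 1 by omega)
        · intro v
          have hk : 0 < k := Fin.pos (α v)
          by_cases hvA' : v ∈ A'
          · calc chg f m v ≤ chg f' m' v := hFchgB v hvA'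
              _ ≤ (2*k)^t := hchg' v
              _ ≤ (2*k)^(t+1) := Nat.pow_le_pow_right (by omega) (by omega)
          · by_cases hvA : v ∈ A
            · have hW := hFchgW v hvA'
              have hcard : (Set.toFinite {x | x ∈ A' ∧ G.Adj v x}).toFinset.card ≤ k - 1 := by
                have hsub : {x | x ∈ A' ∧ G.Adj v x} ⊆ {u | u ∈ A ∧ G.Adj v u} := by
                  rintro x ⟨hx, hadj⟩
                  exact ⟨hA'A hx, hadj⟩
                calc (Set.toFinite {x | x ∈ A' ∧ G.Adj v x}).toFinset.card
                    = {x | x ∈ A' ∧ G.Adj v x}.ncard :=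
                      (Set.ncard_eq_toFinset_card _ _).symm
                  _ ≤ {u | u ∈ A ∧ G.Adj v u}.ncard :=
                      Set.ncard_le_ncard hsub (Set.toFinite _)
                  _ ≤ k - 1 := hdeglow v hvA hvA'
              have hsumle : ∑ x ∈ (Set.toFinite {x | x ∈ A' ∧ G.Adj v x}).toFinset, chg f' m' x
                  ≤ (k-1) * (2*k)^t := by
                calc ∑ x ∈ (Set.toFinite {x | x ∈ A' ∧ G.Adj v x}).toFinset, chg f' m' x
                    ≤ ∑ _x ∈ (Set.toFinite {x | x ∈ A' ∧ G.Adj v x}).toFinset, (2*k)^t :=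
                      Finset.sum_le_sum fun x _ => hchg' x
                  _ = (Set.toFinite {x | x ∈ A' ∧ G.Adj v x}).toFinset.card * (2*k)^t := by
                      rw [Finset.sum_const, smul_eq_mul]
                  _ ≤ (k-1) * (2*k)^t := Nat.mul_le_mul_right _ hcard
              calc chg f m v
                  ≤ 2 * ((k-1) * (2*k)^t) := le_trans hW (by omega)
                _ ≤ (2*k)^(t+1) := by
                    rw [pow_succ, ← Nat.mul_assoc]
                    rw [Nat.mul_comm ((2*k)^t) (2*k)]
                    have : 2 * (k-1) ≤ 2 * k := by omega
                    calc 2 * (k-1) * (2*k)^t ≤ 2*k * (2*k)^t := Nat.mul_le_mul_right _ this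
                      _ = 2*k*(2*k)^t := rfl
            · rw [chg_off hFsteps hvA]
              omega

lemma chain_induce {C : Type*} {G : SimpleGraph V} {S : Set V} {g : V → C} {a b : C}
    (x y : ↥S) :
    InKempeChainOn (G.induce S) Set.univ (fun z => g z.1) a b x y ↔
      InKempeChainOn G S g a b x.1 y.1 := by
  constructor
  · intro h
    induction h with
    | refl => exact ReflTransGen.refl
    | @tail p q hp hrel ih =>
        exact ih.tail ⟨hrel.1, p.2, q.2, hrel.2.2.2.1, hrel.2.2.2.2⟩
  · intro h
    have key : ∀ (p q : V), Relation.ReflTransGen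
        (fun x y => G.Adj x y ∧ x ∈ S ∧ y ∈ S ∧ (g x = a ∨ g x = b) ∧ (g y = a ∨ g y = b)) p q →
        ∀ (hp : p ∈ S) (hq : q ∈ S),
        InKempeChainOn (G.induce S) Set.univ (fun z => g z.1) a b ⟨p, hp⟩ ⟨q, hq⟩ := by
      intro p q hpq
      induction hpq with
      | refl =>
          intro hp hq
          exact ReflTransGen.refl
      | @tail c d hc hrel ih =>
          intro hp hq
          exact (ih hp hrel.2.1).tail ⟨hrel.1, Set.mem_univ _, Set.mem_univ _,
            hrel.2.2.2.1, hrel.2.2.2.2⟩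
    exact key x.1 y.1 h x.2 y.2

end KempeAux

theorem statement_8 (n t k : ℕ) (G : SimpleGraph (Fin n)) (lvl : Fin n → Fin t)
    (hlayer : ∀ v : Fin n, {u : Fin n | G.Adj v u ∧ lvl v ≤ lvl u}.ncard ≤ k - 1)
    (α : Fin n → Fin k) (hα : IsProperColoring G α)
    (i : Fin t) (γ : {v : Fin n | i ≤ lvl v} → Fin k)
    (hγ : KempeStep (G.induce {v : Fin n | i ≤ lvl v}) (fun x => α x.1) γ) :
    ∃ β : Fin n → Fin k,
      KempeEquivIn G (IsProperColoring G) (n ^ 2 * (2 * k) ^ t) α β ∧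
      ∀ x : {v : Fin n | i ≤ lvl v}, β x.1 = γ x := by
  classical
  obtain ⟨a, b, v₀, hv₀, hon, hoff⟩ := hγ
  set γb : Fin n → Fin k :=
    fun v => if h : v ∈ {v : Fin n | i ≤ lvl v} then γ ⟨v, h⟩ else α v with hγbdef
  have hstepS : KempeAux.KempeStepOn G {v : Fin n | i ≤ lvl v} α γb := by
    refine ⟨a, b, v₀.1, v₀.2, hv₀, ?_, ?_⟩
    · intro u hu
      have huS : u ∈ {v : Fin n | i ≤ lvl v} := KempeAux.mem_of_chain v₀.2 hu
      have h1 := hon ⟨u, huS⟩ ((KempeAux.chain_induce v₀ ⟨u, huS⟩).2 hu)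
      simp only [hγbdef]
      rw [dif_pos huS]
      exact h1
    · intro u hu
      by_cases huS : u ∈ {v : Fin n | i ≤ lvl v}
      · have h1 := hoff ⟨u, huS⟩ (fun hc => hu ((KempeAux.chain_induce v₀ ⟨u, huS⟩).1 hc))
        simp only [hγbdef]
        rw [dif_pos huS]
        exact h1
      · simp only [hγbdef]
        rw [dif_neg huS]
  have hαproper : KempeAux.ProperOn G Set.univ α := fun u _ v _ hadj => hα hadj
  have hstepS' : KempeAux.KempeStepOn G
      (Set.univ ∩ {v : Fin n | (i : ℕ) ≤ (lvl v : ℕ)}) α γb := by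
    have hseq : Set.univ ∩ {v : Fin n | (i:ℕ) ≤ (lvl v:ℕ)} = {v : Fin n | i ≤ lvl v} := by
      ext v
      constructor
      · rintro ⟨-, hv⟩
        exact hv
      · intro hv
        exact ⟨trivial, hv⟩
    rw [hseq]
    exact hstepS
  obtain ⟨m, f, hF0, hFprop, hFsteps, hFne, hFfin, hFchg⟩ :=
    KempeAux.main t Set.univ (fun v => (lvl v : ℕ))
      (fun v _ => (lvl v).isLt)
      (by
        intro v _
        have hseq : {u | u ∈ Set.univ ∧ G.Adj v u ∧ (lvl v:ℕ) ≤ (lvl u:ℕ)}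
            = {u | G.Adj v u ∧ lvl v ≤ lvl u} := by
          ext u
          constructor
          · rintro ⟨-, h2, h3⟩
            exact ⟨h2, h3⟩
          · rintro ⟨h2, h3⟩
            exact ⟨trivial, h2, h3⟩
        rw [hseq]
        exact hlayer v)
      i α γb hαproper hstepS'
  have hkpos : 0 < k := Fin.pos a
  have hnpos : 0 < n := Fin.pos v₀.1
  have hmle : m ≤ n * (2*k)^t := by
    have h1 : m ≤ ∑ v : Fin n, KempeAux.chg f m v := by
      have hper : ∀ s ∈ Finset.range m,
          (1:ℕ) ≤ ∑ v : Fin n, (if f (s+1) v = f s v then 0 else 1) := by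
        intro s hs
        obtain ⟨v, hv⟩ := Function.ne_iff.1 (hFne s (Finset.mem_range.1 hs))
        calc (1:ℕ) = (if f (s+1) v = f s v then 0 else 1) := (if_neg hv).symm
          _ ≤ _ := Finset.single_le_sum
              (f := fun v => if f (s+1) v = f s v then (0:ℕ) else 1)
              (fun _ _ => Nat.zero_le _) (Finset.mem_univ v)
      calc m = ∑ _s ∈ Finset.range m, 1 := by
            rw [Finset.sum_const, smul_eq_mul, Nat.mul_one, Finset.card_range]
        _ ≤ ∑ s ∈ Finset.range m, ∑ v : Fin n, (if f (s+1) v = f s v then 0 else 1) :=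
            Finset.sum_le_sum hper
        _ = ∑ v : Fin n, KempeAux.chg f m v := Finset.sum_comm
    calc m ≤ ∑ v : Fin n, KempeAux.chg f m v := h1
      _ ≤ ∑ _v : Fin n, (2*k)^t := Finset.sum_le_sum fun v _ => hFchg v
      _ = n * (2*k)^t := by
          rw [Finset.sum_const, Finset.card_univ, Fintype.card_fin, smul_eq_mul]
  refine ⟨f m, ⟨m, f, ?_, hF0, rfl, ?_, ?_⟩, ?_⟩
  · calc m ≤ n * (2*k)^t := hmle
      _ ≤ n^2 * (2*k)^t := by
          have hn2 : n ≤ n^2 := by nlinarith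
          exact Nat.mul_le_mul_right _ hn2
  · intro j hj
    have hp := hFprop j hj
    intro u v hadj
    exact hp (Set.mem_univ u) (Set.mem_univ v) hadj
  · intro j hj
    obtain ⟨a', b', v', hv'mem, hv'col, hon', hoff'⟩ := hFsteps j hj
    exact ⟨a', b', v', hv'col, hon', hoff'⟩
  · intro x
    have hfin := hFfin x.1 (Set.mem_univ _) x.2
    rw [hfin]
    simp only [hγbdef]
    rw [dif_pos x.2]
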